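/- Let (S₁, step₁), (S₂, step₂), (T₁, step₁'), (T₂, step₂') be LTSs with base relations eq₁ : S₁ → T₁ → Prop and eq₂ : S₂ → T₂ → Prop. If R₁ : S₁ → T₁ → Prop is a functional bisimulation with respect to eq₁ and R₂ : S₂ → T₂ → Prop is a functional bisimulation with respect to eq₂, then the product relation R ((a,b), (c,d)) := R₁ a c ∧ R₂ b d is a functional bisimulation between the interleaving product of (S₁, step₁) and (S₂, step₂) and the interleaving product of (T₁, step₁') and (T₂, step₂'), with respect to the product base relation eq ((a,b), (c,d)) := eq₁ a c ∧ eq₂ b d. In particular, if a ∼ c and b ∼ d then (a, b) ∼ (c, d), i.e. functional bisimilarity is a congruence with respect to interleaving products. -/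
import Mathlib


/-- A relation `R` is a *functional bisimulation* between the LTSs `(S, stepS)` and
`(T, stepT)` with respect to the base relation `eq`. -/
def FunBisim {S T : Type*} (stepS : S → S → Prop) (stepT : T → T → Prop)
    (eq : S → T → Prop) (R : S → T → Prop) : Prop :=
  ∀ s t, R s t →
    (∀ s₁, Relation.ReflTransGen stepS s s₁ →
      ∃ t₁, Relation.ReflTransGen stepT t t₁ ∧ eq s₁ t₁ ∧ R s₁ t₁) ∧
    (∀ t₁, Relation.ReflTransGen stepT t t₁ →
      ∃ s₁, Relation.ReflTransGen stepS s s₁ ∧ eq s₁ t₁ ∧ R s₁ t₁)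

/-- States are *functionally bisimilar* if related by some functional bisimulation. -/
def FunBisimilar {S T : Type*} (stepS : S → S → Prop) (stepT : T → T → Prop)
    (eq : S → T → Prop) (s : S) (t : T) : Prop :=
  ∃ R : S → T → Prop, FunBisim stepS stepT eq R ∧ R s t

/-- The interleaving product of two LTSs. -/
def Interleave {S₁ S₂ : Type*} (step₁ : S₁ → S₁ → Prop) (step₂ : S₂ → S₂ → Prop) :
    S₁ × S₂ → S₁ × S₂ → Prop :=
  fun p q => (step₁ p.1 q.1 ∧ p.2 = q.2) ∨ (p.1 = q.1 ∧ step₂ p.2 q.2)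

section
variable {S₁ S₂ : Type*} {step₁ : S₁ → S₁ → Prop} {step₂ : S₂ → S₂ → Prop}

lemma interleave_rtg_proj {p q : S₁ × S₂}
    (h : Relation.ReflTransGen (Interleave step₁ step₂) p q) :
    Relation.ReflTransGen step₁ p.1 q.1 ∧ Relation.ReflTransGen step₂ p.2 q.2 := by
  induction h with
  | refl => exact ⟨.refl, .refl⟩
  | tail _ hstep ih =>
    rcases hstep with ⟨h1, h2⟩ | ⟨h1, h2⟩
    · exact ⟨ih.1.tail h1, h2 ▸ ih.2⟩
    · exact ⟨h1 ▸ ih.1, ih.2.tail h2⟩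

lemma rtg_interleave {a a' : S₁} {b b' : S₂}
    (h1 : Relation.ReflTransGen step₁ a a') (h2 : Relation.ReflTransGen step₂ b b') :
    Relation.ReflTransGen (Interleave step₁ step₂) (a, b) (a', b') := by
  have left : Relation.ReflTransGen (Interleave step₁ step₂) (a, b) (a', b) := by
    induction h1 with
    | refl => exact .refl
    | tail _ hs ih => exact ih.tail (Or.inl ⟨hs, rfl⟩)
  refine left.trans ?_
  induction h2 with
  | refl => exact .refl
  | tail _ hs ih => exact ih.tail (Or.inr ⟨rfl, hs⟩)

end

theorem funBisim_interleave_aux {S₁ S₂ T₁ T₂ : Type*}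
    (step₁ : S₁ → S₁ → Prop) (step₂ : S₂ → S₂ → Prop)
    (step₁' : T₁ → T₁ → Prop) (step₂' : T₂ → T₂ → Prop)
    (eq₁ : S₁ → T₁ → Prop) (eq₂ : S₂ → T₂ → Prop)
    (R₁ : S₁ → T₁ → Prop) (R₂ : S₂ → T₂ → Prop)
    (h₁ : FunBisim step₁ step₁' eq₁ R₁) (h₂ : FunBisim step₂ step₂' eq₂ R₂) :
    FunBisim (Interleave step₁ step₂) (Interleave step₁' step₂')
        (fun p q => eq₁ p.1 q.1 ∧ eq₂ p.2 q.2)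
        (fun p q => R₁ p.1 q.1 ∧ R₂ p.2 q.2) := by
  rintro ⟨a, b⟩ ⟨c, d⟩ ⟨hR1, hR2⟩
  constructor
  · rintro ⟨a₁, b₁⟩ hst
    obtain ⟨hs1, hs2⟩ := interleave_rtg_proj hst
    obtain ⟨c₁, hc, he1, hr1⟩ := (h₁ a c hR1).1 a₁ hs1
    obtain ⟨d₁, hd, he2, hr2⟩ := (h₂ b d hR2).1 b₁ hs2
    exact ⟨(c₁, d₁), rtg_interleave hc hd, ⟨he1, he2⟩, ⟨hr1, hr2⟩⟩
  · rintro ⟨c₁, d₁⟩ hst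
    obtain ⟨hs1, hs2⟩ := interleave_rtg_proj hst
    obtain ⟨a₁, ha, he1, hr1⟩ := (h₁ a c hR1).2 c₁ hs1
    obtain ⟨b₁, hb, he2, hr2⟩ := (h₂ b d hR2).2 d₁ hs2
    exact ⟨(a₁, b₁), rtg_interleave ha hb, ⟨he1, he2⟩, ⟨hr1, hr2⟩⟩

theorem funBisim_interleave {S₁ S₂ T₁ T₂ : Type*}
    (step₁ : S₁ → S₁ → Prop) (step₂ : S₂ → S₂ → Prop)
    (step₁' : T₁ → T₁ → Prop) (step₂' : T₂ → T₂ → Prop)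
    (eq₁ : S₁ → T₁ → Prop) (eq₂ : S₂ → T₂ → Prop)
    (R₁ : S₁ → T₁ → Prop) (R₂ : S₂ → T₂ → Prop)
    (h₁ : FunBisim step₁ step₁' eq₁ R₁) (h₂ : FunBisim step₂ step₂' eq₂ R₂) :
    FunBisim (Interleave step₁ step₂) (Interleave step₁' step₂')
        (fun p q => eq₁ p.1 q.1 ∧ eq₂ p.2 q.2)
        (fun p q => R₁ p.1 q.1 ∧ R₂ p.2 q.2) ∧
      ∀ (a : S₁) (b : S₂) (c : T₁) (d : T₂),
        FunBisimilar step₁ step₁' eq₁ a c → FunBisimilar step₂ step₂' eq₂ b d →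
          FunBisimilar (Interleave step₁ step₂) (Interleave step₁' step₂')
            (fun p q => eq₁ p.1 q.1 ∧ eq₂ p.2 q.2) (a, b) (c, d) := by
  refine ⟨funBisim_interleave_aux _ _ _ _ _ _ _ _ h₁ h₂, ?_⟩
  rintro a b c d ⟨Q₁, hQ₁, hq₁⟩ ⟨Q₂, hQ₂, hq₂⟩
  exact ⟨fun p q => Q₁ p.1 q.1 ∧ Q₂ p.2 q.2,
    funBisim_interleave_aux _ _ _ _ _ _ _ _ hQ₁ hQ₂, hq₁, hq₂⟩
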